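/- Let R be a commutative ring, S a multiplicative subset of R, and π : R → S⁻¹R the canonical localization map. For f ∈ R, f belongs to the intersection of all prime ideals of R lying in the image of the induced map Spec(S⁻¹R) → Spec(R) if and only if there exists g ∈ S such that f·g is nilpotent. -/
import Mathlib


/-- For the canonical map `π : R → S⁻¹R`, an element `f ∈ R` lies in the intersection of all
primes of `R` in the image of `Spec(S⁻¹R) → Spec(R)` iff `f * g` is nilpotent for some `g ∈ S`. -/
theorem stmt0 {R : Type*} [CommRing R] (S : Submonoid R) (f : R) :
    (∀ p : Ideal R, (∃ q : Ideal (Localization S), q.IsPrime ∧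
        q.comap (algebraMap R (Localization S)) = p) → f ∈ p) ↔
      ∃ g ∈ S, IsNilpotent (f * g) := by
  have key : (∀ p : Ideal R, (∃ q : Ideal (Localization S), q.IsPrime ∧
      q.comap (algebraMap R (Localization S)) = p) → f ∈ p) ↔
      IsNilpotent (algebraMap R (Localization S) f) := by
    constructor
    · intro h
      rw [← mem_nilradical, nilradical_eq_sInf, Ideal.mem_sInf]
      intro q hq
      exact h (q.comap (algebraMap R (Localization S))) ⟨q, hq, rfl⟩
    · rintro ⟨n, hn⟩ p ⟨q, hq, rfl⟩
      exact hq.mem_of_pow_mem n (by rw [hn]; exact q.zero_mem)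
  rw [key]
  constructor
  · rintro ⟨n, hn⟩
    rw [← map_pow, IsLocalization.map_eq_zero_iff S] at hn
    obtain ⟨s, hs⟩ := hn
    refine ⟨s, s.2, n + 1, ?_⟩
    have : (f * (s : R)) ^ (n + 1) = ((s : R) * f ^ n) * (f * (s : R) ^ n) := by ring
    rw [this, hs, zero_mul]
  · rintro ⟨g, hg, n, hn⟩
    have hgu : IsUnit (algebraMap R (Localization S) g) :=
      IsLocalization.map_units (Localization S) ⟨g, hg⟩
    have : IsNilpotent (algebraMap R (Localization S) f *
        algebraMap R (Localization S) g) := by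
      rw [← map_mul]
      exact ⟨n, by rw [← map_pow, hn, map_zero]⟩
    exact (hgu.isNilpotent_mul_unit_of_commute_iff (Commute.all _ _)).mp this
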